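/- For any prime p and natural numbers m, n, the Bell numbers satisfy the Touchard congruence B_{p^m + n} ≡ m·B_n + B_{n+1} (mod p). -/
import Mathlib


/-- Stirling numbers of the second kind. -/
def stirling2 : ℕ → ℕ → ℕ
  | 0, 0 => 1
  | 0, _ + 1 => 0
  | _ + 1, 0 => 0
  | n + 1, k + 1 => (k + 1) * stirling2 n (k + 1) + stirling2 n k

/-- The Bell numbers: the number of partitions of an `n`-element set. -/
def bell (n : ℕ) : ℕ := ∑ k ∈ Finset.range (n + 1), stirling2 n k

open Finset

lemma stirling2_succ (n k : ℕ) :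
    stirling2 (n+1) (k+1) = (k + 1) * stirling2 n (k + 1) + stirling2 n k := rfl

lemma stirling2_zero_right (n : ℕ) : stirling2 (n+1) 0 = 0 := rfl

lemma stirling2_eq_zero_of_lt : ∀ {n k : ℕ}, n < k → stirling2 n k = 0
  | 0, 0, h => absurd h (by omega)
  | 0, k+1, _ => rfl
  | n+1, 0, h => absurd h (by omega)
  | n+1, k+1, h => by
      rw [stirling2_succ, stirling2_eq_zero_of_lt (by omega),
        stirling2_eq_zero_of_lt (by omega)]
      ring

lemma stirling2_self : ∀ n : ℕ, stirling2 n n = 1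
  | 0 => rfl
  | n+1 => by
      rw [stirling2_succ, stirling2_self n, stirling2_eq_zero_of_lt (by omega)]
      ring

lemma stirling2_one_right : ∀ n : ℕ, stirling2 (n+1) 1 = 1
  | 0 => rfl
  | n+1 => by
      show stirling2 (n+1+1) (0+1) = 1
      rw [stirling2_succ, stirling2_one_right n, stirling2_zero_right]

lemma factorial_mul_stirling2 : ∀ (n k : ℕ),
    (k.factorial : ℤ) * stirling2 n k =
      ∑ j ∈ range (k+1), (-1)^j * (k.choose j) * ((k-j : ℕ) : ℤ)^n
  | 0, 0 => by simp [stirling2]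
  | 0, k+1 => by
      rw [stirling2_eq_zero_of_lt (by omega)]
      have h := Int.alternating_sum_range_choose (n := k+1)
      rw [if_neg (by omega)] at h
      simp only [pow_zero, mul_one, Nat.cast_zero, mul_zero]
      rw [← h]
  | n+1, 0 => by simp [stirling2_zero_right]
  | n+1, k+1 => by
      have IH1 := factorial_mul_stirling2 n (k+1)
      have IH0 := factorial_mul_stirling2 n k
      rw [stirling2_succ]
      push_cast
      rw [Nat.factorial_succ]
      push_cast
      have key : ∑ j ∈ range (k+2), (-1:ℤ)^j * ((k+1).choose j) * ((k+1-j : ℕ) : ℤ)^(n+1)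
          = (k+1) * (∑ j ∈ range (k+2), (-1:ℤ)^j * (k.choose j) * ((k+1-j : ℕ) : ℤ)^n) := by
        rw [Finset.mul_sum]
        refine Finset.sum_congr rfl (fun j _ => ?_)
        have hc : (k.choose j * (k + 1) : ℤ) = ((k+1).choose j) * ((k+1-j : ℕ) : ℤ) := by
          exact_mod_cast congrArg (Nat.cast : ℕ → ℤ) (Nat.choose_mul_succ_eq k j)
        calc (-1:ℤ)^j * ((k+1).choose j) * ((k+1-j : ℕ) : ℤ)^(n+1)
            = (-1:ℤ)^j * (((k+1).choose j) * ((k+1-j : ℕ) : ℤ)) * ((k+1-j : ℕ) : ℤ)^n := by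
              ring
          _ = _ := by rw [← hc]; ring
      rw [key]
      have split : ∑ j ∈ range (k+2), (-1:ℤ)^j * (k.choose j) * ((k+1-j : ℕ) : ℤ)^n
          = (∑ j ∈ range (k+2), (-1:ℤ)^j * ((k+1).choose j) * ((k+1-j : ℕ) : ℤ)^n)
            + ∑ j ∈ range (k+1), (-1:ℤ)^j * (k.choose j) * ((k-j : ℕ) : ℤ)^n := by
        rw [Finset.sum_range_succ' (fun j => (-1:ℤ)^j * (k.choose j) * ((k+1-j : ℕ) : ℤ)^n),
            Finset.sum_range_succ' (fun j => (-1:ℤ)^j * ((k+1).choose j) * ((k+1-j : ℕ) : ℤ)^n)]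
        rw [add_assoc, add_comm (((-1:ℤ)^0 * ((k+1).choose 0) * ((k+1-0 : ℕ) : ℤ)^n)), ← add_assoc,
            ← Finset.sum_add_distrib]
        simp only [Nat.choose_zero_right, pow_zero, one_mul, Nat.cast_one]
        congr 1
        refine Finset.sum_congr rfl (fun j hj => ?_)
        have h1 : (k+1) - (j+1) = k - j := by omega
        have h2 : (k+1).choose (j+1) = k.choose j + k.choose (j+1) := Nat.choose_succ_succ k j
        rw [h1, h2]
        push_cast
        ring
      push_cast [Nat.factorial_succ] at IH1
      rw [split]
      linear_combination ((k:ℤ)+1) * IH1 + ((k:ℤ)+1) * IH0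

section
variable (p : ℕ) [hp : Fact p.Prime]

lemma stirling2_p_eq (k : ℕ) (hk : k < p) :
    (stirling2 p k : ZMod p) = (stirling2 1 k : ZMod p) := by
  have h1 := congrArg (Int.cast : ℤ → ZMod p) (factorial_mul_stirling2 p k)
  have h2 := congrArg (Int.cast : ℤ → ZMod p) (factorial_mul_stirling2 1 k)
  push_cast at h1
  push_cast at h2
  have hsum : ∑ j ∈ range (k+1), (-1:ZMod p)^j * (k.choose j) * ((k-j : ℕ) : ZMod p)^p
      = ∑ j ∈ range (k+1), (-1:ZMod p)^j * (k.choose j) * ((k-j : ℕ) : ZMod p)^1 := by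
    refine Finset.sum_congr rfl (fun j _ => ?_)
    rw [ZMod.pow_card, pow_one]
  rw [hsum, ← h2] at h1
  have hfac : (k.factorial : ZMod p) ≠ 0 := by
    rw [Ne, ZMod.natCast_eq_zero_iff]
    intro hdvd
    exact absurd ((Nat.Prime.dvd_factorial hp.out).mp hdvd) (by omega)
  exact mul_left_cancel₀ hfac h1

lemma bell_p_eq : (bell p : ZMod p) = 2 := by
  have hp2 : 2 ≤ p := hp.out.two_le
  unfold bell
  push_cast
  rw [Finset.sum_range_succ]
  have h1 : ∑ k ∈ range p, (stirling2 p k : ZMod p)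
      = ∑ k ∈ range p, (stirling2 1 k : ZMod p) :=
    Finset.sum_congr rfl (fun k hk => stirling2_p_eq p k (mem_range.mp hk))
  have h2 : ∑ k ∈ range p, (stirling2 1 k : ZMod p)
      = ∑ k ∈ range 2, (stirling2 1 k : ZMod p) := by
    refine (Finset.sum_subset (by intro x hx; simp at hx ⊢; omega) ?_).symm
    intro x _ hx
    simp only [mem_range, not_lt] at hx
    rw [stirling2_eq_zero_of_lt (by omega), Nat.cast_zero]
  rw [h1, h2, stirling2_self p]
  rw [show (2:ℕ) = 1+1 from rfl, Finset.sum_range_succ, Finset.sum_range_succ,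
    Finset.sum_range_zero]
  show (0:ZMod p) + ((0:ℕ):ZMod p) + ((1:ℕ):ZMod p) + ((1:ℕ):ZMod p) = 2
  push_cast
  ring
end

lemma stirling2_succ_sum : ∀ (n k : ℕ),
    stirling2 (n+1) (k+1) = ∑ j ∈ range (n+1), n.choose j * stirling2 j k
  | 0, k => by
      simp [stirling2_succ, stirling2_eq_zero_of_lt]
  | n+1, k => by
      have expand : ∑ j ∈ range (n+2), (n+1).choose j * stirling2 j k
          = (∑ j ∈ range (n+1), n.choose j * stirling2 j k)
            + ∑ j ∈ range (n+1), n.choose j * stirling2 (j+1) k := by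
        rw [Finset.sum_range_succ' (fun j => (n+1).choose j * stirling2 j k)]
        simp only [Nat.choose_succ_succ, Nat.succ_eq_add_one, add_mul]
        rw [Finset.sum_add_distrib]
        have h3 : ∑ j ∈ range (n+1), n.choose (j+1) * stirling2 (j+1) k
              + (n+1).choose 0 * stirling2 0 k
            = ∑ j ∈ range (n+1), n.choose j * stirling2 j k := by
          have h0 : (n+1).choose 0 * stirling2 0 k = n.choose 0 * stirling2 0 k := by simp
          rw [h0, ← Finset.sum_range_succ' (fun j => n.choose j * stirling2 j k),
              Finset.sum_range_succ, Nat.choose_succ_self, zero_mul, add_zero]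
        omega
      rw [expand, ← stirling2_succ_sum n k]
      cases k with
      | zero =>
          have hz : ∑ j ∈ range (n+1), n.choose j * stirling2 (j+1) 0 = 0 :=
            Finset.sum_eq_zero (fun j _ => by rw [stirling2_zero_right, mul_zero])
          rw [hz, add_zero]
          show (0+1) * stirling2 (n+1) (0+1) + stirling2 (n+1) 0 = stirling2 (n+1) 1
          rw [stirling2_zero_right]
          ring
      | succ k' =>
          have hs : ∑ j ∈ range (n+1), n.choose j * stirling2 (j+1) (k'+1)
              = ∑ j ∈ range (n+1), n.choose j * ((k'+1) * stirling2 j (k'+1) + stirling2 j k') :=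
            rfl
          rw [hs]
          have : ∑ j ∈ range (n+1), n.choose j * ((k'+1) * stirling2 j (k'+1) + stirling2 j k')
              = (k'+1) * (∑ j ∈ range (n+1), n.choose j * stirling2 j (k'+1))
                + ∑ j ∈ range (n+1), n.choose j * stirling2 j k' := by
            rw [Finset.mul_sum, ← Finset.sum_add_distrib]
            exact Finset.sum_congr rfl (fun j _ => by ring)
          rw [this, ← stirling2_succ_sum n (k'+1), ← stirling2_succ_sum n k']
          rw [stirling2_succ (n+1) (k'+1)]
          ring

lemma bell_succ (n : ℕ) : bell (n+1) = ∑ j ∈ range (n+1), n.choose j * bell j := by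
  unfold bell
  rw [Finset.sum_range_succ' (fun k => stirling2 (n+1) k), stirling2_zero_right, add_zero]
  have h1 : ∑ k ∈ range (n+1), stirling2 (n+1) (k+1)
      = ∑ k ∈ range (n+1), ∑ j ∈ range (n+1), n.choose j * stirling2 j k :=
    Finset.sum_congr rfl (fun k _ => stirling2_succ_sum n k)
  rw [h1, Finset.sum_comm]
  refine Finset.sum_congr rfl (fun j hj => ?_)
  rw [← Finset.mul_sum]
  congr 1
  refine (Finset.sum_subset (by intro x hx; simp at hx ⊢; simp at hj; omega) ?_).symm
  intro x _ hx
  simp only [mem_range, not_lt] at hx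
  exact stirling2_eq_zero_of_lt (by omega)

lemma bell_succ_succ (n : ℕ) :
    bell (n+2) = bell (n+1) + ∑ j ∈ range (n+1), n.choose j * bell (j+1) := by
  rw [bell_succ (n+1), Finset.sum_range_succ' (fun j => (n+1).choose j * bell j)]
  simp only [Nat.choose_zero_right, one_mul, Nat.choose_succ_succ]
  have : ∑ j ∈ range (n+1), (n.choose j + n.choose (j+1)) * bell (j+1)
      = ∑ j ∈ range (n+1), n.choose (j+1) * bell (j+1)
        + ∑ j ∈ range (n+1), n.choose j * bell (j+1) := by
    rw [← Finset.sum_add_distrib]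
    exact Finset.sum_congr rfl (fun j _ => by ring)
  rw [this]
  have h2 : ∑ j ∈ range (n+1), n.choose (j+1) * bell (j+1) + bell 0
      = bell (n+1) := by
    rw [Finset.sum_range_succ, Nat.choose_succ_self, zero_mul, add_zero,
      bell_succ n, Finset.sum_range_succ' (fun j => n.choose j * bell j)]
    simp
  omega

section
variable (p : ℕ) [hp : Fact p.Prime]

lemma choose_p_add (n k : ℕ) :
    ((p + n).choose k : ZMod p)
      = (n.choose k : ZMod p) + if p ≤ k then (n.choose (k-p) : ZMod p) else 0 := by
  have h := Nat.add_choose_eq p n k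
  have hcast := congrArg (Nat.cast : ℕ → ZMod p) h
  push_cast at hcast
  rw [hcast, Finset.Nat.sum_antidiagonal_eq_sum_range_succ_mk]
  have hz : ∀ i ∈ range (k+1), i ≠ 0 → i ≠ p →
      (p.choose i : ZMod p) * (n.choose (k-i) : ZMod p) = 0 := by
    intro i _ h0 hpi
    rcases lt_or_ge i p with hlt | hge
    · have : (p.choose i : ZMod p) = 0 := by
        rw [ZMod.natCast_eq_zero_iff]
        exact Nat.Prime.dvd_choose_self hp.out h0 hlt
      rw [this, zero_mul]
    · have : p.choose i = 0 := Nat.choose_eq_zero_of_lt (by omega)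
      rw [this, Nat.cast_zero, zero_mul]
  by_cases hpk : p ≤ k
  · rw [if_pos hpk]
    have hsub : ({0, p} : Finset ℕ) ⊆ range (k+1) := by
      intro x hx; simp at hx ⊢; rcases hx with h|h <;> omega
    rw [← Finset.sum_subset hsub (by
      intro i hi hnot
      simp only [Finset.mem_insert, Finset.mem_singleton, not_or] at hnot
      exact hz i hi hnot.1 hnot.2)]
    rw [Finset.sum_pair (by have := hp.out.pos; omega : (0:ℕ) ≠ p)]
    simp [Nat.choose_self, Nat.choose_zero_right]
  · rw [if_neg hpk]
    have hsub : ({0} : Finset ℕ) ⊆ range (k+1) := by simp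
    rw [← Finset.sum_subset hsub (by
      intro i hi hnot
      simp only [Finset.mem_singleton] at hnot
      exact hz i hi hnot (by simp at hi; omega))]
    simp [Nat.choose_zero_right]

lemma bell_add_p (n : ℕ) :
    (bell (n + p) : ZMod p) = (bell n : ZMod p) + (bell (n+1) : ZMod p) := by
  have key : ∀ N, ∀ j ≤ N, (bell (j + p) : ZMod p) = (bell j : ZMod p) + (bell (j+1) : ZMod p) := by
    intro N
    induction N with
    | zero =>
        intro j hj
        interval_cases j
        show (bell (0 + p) : ZMod p) = ((bell 0 : ℕ) : ZMod p) + ((bell 1 : ℕ) : ZMod p)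
        rw [Nat.zero_add, bell_p_eq p, show bell 0 = 1 from rfl, show bell 1 = 1 from rfl]
        push_cast
        norm_num
    | succ n IH =>
        intro j hj
        rcases Nat.lt_or_ge j (n+1) with hlt | hge
        · exact IH j (by omega)
        · have hj' : j = n + 1 := by omega
          subst hj'
          have e1 : n + 1 + p = (p + n) + 1 := by ring
          rw [e1, bell_succ (p+n)]
          push_cast
          have e2 : ∑ k ∈ range (p+n+1), ((p+n).choose k : ZMod p) * (bell k : ZMod p)
              = ∑ k ∈ range (p+n+1), ((n.choose k : ZMod p)
                  + if p ≤ k then (n.choose (k-p) : ZMod p) else 0) * (bell k : ZMod p) :=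
            Finset.sum_congr rfl (fun k _ => by rw [choose_p_add])
          rw [e2]
          simp only [add_mul, ite_mul, zero_mul]
          rw [Finset.sum_add_distrib]
          have e3 : ∑ k ∈ range (p+n+1), (n.choose k : ZMod p) * (bell k : ZMod p)
              = ∑ k ∈ range (n+1), (n.choose k : ZMod p) * (bell k : ZMod p) := by
            refine (Finset.sum_subset (by intro x hx; simp at hx ⊢; omega) ?_).symm
            intro x _ hx
            simp only [mem_range, not_lt] at hx
            rw [Nat.choose_eq_zero_of_lt (by omega), Nat.cast_zero, zero_mul]
          have e4 : (∑ k ∈ range (n+1), (n.choose k : ZMod p) * (bell k : ZMod p))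
              = (bell (n+1) : ZMod p) := by
            rw [bell_succ n]; push_cast; rfl
          have e5 : ∑ k ∈ range (p+n+1),
                (if p ≤ k then (n.choose (k-p) : ZMod p) * (bell k : ZMod p) else 0)
              = ∑ i ∈ range (n+1), (n.choose i : ZMod p) * (bell (i+p) : ZMod p) := by
            have : p + n + 1 = p + (n+1) := by ring
            rw [this, Finset.sum_range_add]
            have hz : ∑ i ∈ range p,
                (if p ≤ i then (n.choose (i-p) : ZMod p) * (bell i : ZMod p) else 0) = 0 :=
              Finset.sum_eq_zero (fun i hi => by
                rw [if_neg]; simp at hi; omega)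
            rw [hz, zero_add]
            refine Finset.sum_congr rfl (fun i _ => ?_)
            rw [if_pos (by omega), show p + i - p = i from by omega,
              show p + i = i + p from by omega]
          rw [e3, e4, e5]
          have e6 : ∑ i ∈ range (n+1), (n.choose i : ZMod p) * (bell (i+p) : ZMod p)
              = ∑ i ∈ range (n+1), (n.choose i : ZMod p)
                  * ((bell i : ZMod p) + (bell (i+1) : ZMod p)) :=
            Finset.sum_congr rfl (fun i hi => by rw [IH i (by simp at hi; omega)])
          rw [e6]
          simp only [mul_add]
          rw [Finset.sum_add_distrib, e4]
          have e7 : ∑ i ∈ range (n+1), (n.choose i : ZMod p) * (bell (i+1) : ZMod p)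
              = (bell (n+2) : ZMod p) - (bell (n+1) : ZMod p) := by
            have := bell_succ_succ n
            have hcast := congrArg (Nat.cast : ℕ → ZMod p) this
            push_cast at hcast
            rw [hcast]; ring
          rw [e7]
          ring
  exact key n n le_rfl
end

section
variable (p : ℕ) [hp : Fact p.Prime]

lemma bell_iterate (m : ℕ)
    (hC : ∀ n, (bell (p^m + n) : ZMod p) = (m : ZMod p) * bell n + bell (n+1)) :
    ∀ (k n : ℕ), (bell (k * p^m + n) : ZMod p)
      = ∑ i ∈ range (k+1), (k.choose i : ZMod p) * (m : ZMod p)^(k-i) * (bell (n+i) : ZMod p) := by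
  intro k
  induction k with
  | zero => intro n; simp
  | succ k IH =>
      intro n
      have e1 : (k+1) * p^m + n = p^m + (k * p^m + n) := by ring
      rw [e1, hC, IH n, show k * p^m + n + 1 = k * p^m + (n+1) from by omega, IH (n+1)]
      have e2 : (m : ZMod p) * ∑ i ∈ range (k+1),
            (k.choose i : ZMod p) * (m : ZMod p)^(k-i) * (bell (n+i) : ZMod p)
          = ∑ i ∈ range (k+1),
            (k.choose i : ZMod p) * (m : ZMod p)^(k+1-i) * (bell (n+i) : ZMod p) := by
        rw [Finset.mul_sum]
        refine Finset.sum_congr rfl (fun i hi => ?_)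
        rw [show k + 1 - i = (k - i) + 1 from by simp at hi; omega, pow_succ]
        ring
      rw [e2]
      have e3 : ∑ i ∈ range (k+2),
            (((k+1).choose i : ℕ) : ZMod p) * (m : ZMod p)^(k+1-i) * (bell (n+i) : ZMod p)
          = (∑ i ∈ range (k+1),
              (k.choose i : ZMod p) * (m : ZMod p)^(k+1-i) * (bell (n+i) : ZMod p))
            + ∑ i ∈ range (k+1),
              (k.choose i : ZMod p) * (m : ZMod p)^(k-i) * (bell (n+1+i) : ZMod p) := by
        rw [Finset.sum_range_succ' (fun i =>
          (((k+1).choose i : ℕ) : ZMod p) * (m : ZMod p)^(k+1-i) * (bell (n+i) : ZMod p))]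
        have h1 : ∑ i ∈ range (k+1),
              (((k+1).choose (i+1) : ℕ) : ZMod p) * (m : ZMod p)^(k+1-(i+1)) * (bell (n+(i+1)) : ZMod p)
            = ∑ i ∈ range (k+1),
              ((k.choose i : ZMod p) * (m : ZMod p)^(k-i) * (bell (n+1+i) : ZMod p)
                + (k.choose (i+1) : ZMod p) * (m : ZMod p)^(k-i) * (bell (n+(i+1)) : ZMod p)) := by
          refine Finset.sum_congr rfl (fun i hi => ?_)
          rw [Nat.choose_succ_succ, show k+1-(i+1) = k-i from by omega,
            show n+1+i = n+(i+1) from by omega]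
          push_cast
          ring
        rw [h1, Finset.sum_add_distrib]
        have h2 : (∑ i ∈ range (k+1),
                (k.choose (i+1) : ZMod p) * (m : ZMod p)^(k-i) * (bell (n+(i+1)) : ZMod p))
              + (((k+1).choose 0 : ℕ) : ZMod p) * (m : ZMod p)^(k+1-0) * (bell (n+0) : ZMod p)
            = ∑ i ∈ range (k+1),
                (k.choose i : ZMod p) * (m : ZMod p)^(k+1-i) * (bell (n+i) : ZMod p) := by
          rw [Finset.sum_range_succ (fun i =>
                (k.choose (i+1) : ZMod p) * (m : ZMod p)^(k-i) * (bell (n+(i+1)) : ZMod p)),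
              Finset.sum_range_succ' (fun i =>
                (k.choose i : ZMod p) * (m : ZMod p)^(k+1-i) * (bell (n+i) : ZMod p))]
          simp only [Nat.choose_succ_self, Nat.cast_zero, zero_mul, add_zero,
            Nat.succ_sub_succ, Nat.choose_zero_right, Nat.cast_one, Nat.sub_zero,
            Nat.cast_ofNat, one_mul]
        rw [← h2]
        ring
      rw [e3]

lemma bell_pow_touchard (m : ℕ) :
    ∀ n, (bell (p^m + n) : ZMod p)
      = (m : ZMod p) * (bell n : ZMod p) + (bell (n+1) : ZMod p) := by
  induction m with
  | zero => intro n; rw [pow_zero, Nat.add_comm 1 n]; simp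
  | succ m IH =>
      intro n
      have hppos := hp.out.pos
      have e1 : p^(m+1) + n = p * p^m + n := by ring
      rw [e1, bell_iterate p m IH p n, Finset.sum_range_succ]
      have hpe : p = (p-1) + 1 := by omega
      have hsp : ∑ i ∈ range p,
            (p.choose i : ZMod p) * (m : ZMod p)^(p-i) * (bell (n+i) : ZMod p)
          = ∑ i ∈ range ((p-1)+1),
            (p.choose i : ZMod p) * (m : ZMod p)^(p-i) * (bell (n+i) : ZMod p) := by
        rw [← hpe]
      rw [hsp, Finset.sum_range_succ' (fun i =>
        (p.choose i : ZMod p) * (m : ZMod p)^(p-i) * (bell (n+i) : ZMod p))]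
      have hmid : ∑ i ∈ range (p-1),
            (p.choose (i+1) : ZMod p) * (m : ZMod p)^(p-(i+1)) * (bell (n+(i+1)) : ZMod p)
          = 0 :=
        Finset.sum_eq_zero (fun i hi => by
          have hi' := Finset.mem_range.mp hi
          have hc : (p.choose (i+1) : ZMod p) = 0 := by
            rw [ZMod.natCast_eq_zero_iff]
            exact Nat.Prime.dvd_choose_self hp.out (by omega) (by omega)
          rw [hc, zero_mul, zero_mul])
      rw [hmid, zero_add]
      simp only [Nat.choose_zero_right, Nat.cast_one, one_mul, Nat.sub_zero,
        Nat.choose_self, Nat.sub_self, pow_zero, mul_one, Nat.add_zero, add_zero]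
      rw [ZMod.pow_card, bell_add_p p n]
      push_cast
      ring
end

/-- Touchard's congruence: `B_{p^m+n} ≡ m·B_n + B_{n+1} (mod p)`. -/
theorem bell_touchard (p : ℕ) [Fact p.Prime] (m n : ℕ) :
    (bell (p ^ m + n) : ℤ) ≡ (m : ℤ) * bell n + bell (n + 1) [ZMOD p] := by
  have h := bell_pow_touchard p m n
  apply (ZMod.intCast_eq_intCast_iff _ _ _).mp
  push_cast
  exact_mod_cast h
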